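/- Let Q_B be the quotient of the polynomial ring ℚ[X₁,X₂,X₃] by the ideal generated by the ten elements X₁³, X₁²X₃, X₁²X₂ + X₁X₃², 6X₁X₂X₃ + X₃³, X₁X₃³, X₁X₂² + X₂X₃², X₂²X₃, X₂X₃³, X₂³, and X₃⁵. Then Q_B is a 14-dimensional ℚ-vector space, and the images of the fourteen monomials 1, X₁, X₁², X₃, X₁X₃, X₂, X₁X₂, X₃², X₁X₃², X₂X₃, X₂², X₃³, X₂X₃², X₃⁴ form a ℚ-basis of Q_B. -/

import Mathlib

open MvPolynomial

/-- The ideal of relations in Theorem B of the paper: generated by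
`X₁³, X₁²X₃, X₁²X₂ + X₁X₃², 6X₁X₂X₃ + X₃³, X₁X₃³, X₁X₂² + X₂X₃², X₂²X₃, X₂X₃³, X₂³, X₃⁵`,
where `X₁ = X 0`, `X₂ = X 1`, `X₃ = X 2`. -/
noncomputable def thmBIdeal : Ideal (MvPolynomial (Fin 3) ℚ) :=
  Ideal.span {(X 0) ^ 3, (X 0) ^ 2 * X 2, (X 0) ^ 2 * X 1 + X 0 * (X 2) ^ 2,
    6 * (X 0 * X 1 * X 2) + (X 2) ^ 3, X 0 * (X 2) ^ 3,
    X 0 * (X 1) ^ 2 + X 1 * (X 2) ^ 2, (X 1) ^ 2 * X 2,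
    X 1 * (X 2) ^ 3, (X 1) ^ 3, (X 2) ^ 5}

/-- The quotient ring `Q_B = ℚ[X₁,X₂,X₃]/thmBIdeal`. -/
noncomputable abbrev Q_B : Type := MvPolynomial (Fin 3) ℚ ⧸ thmBIdeal

/-- The fourteen monomials
`1, X₁, X₁², X₃, X₁X₃, X₂, X₁X₂, X₃², X₁X₃², X₂X₃, X₂², X₃³, X₂X₃², X₃⁴` in `ℚ[X₁,X₂,X₃]`. -/
noncomputable def thmBMonomials : Fin 14 → MvPolynomial (Fin 3) ℚ :=
  ![1, X 0, (X 0) ^ 2, X 2, X 0 * X 2, X 1, X 0 * X 1, (X 2) ^ 2,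
    X 0 * (X 2) ^ 2, X 1 * X 2, (X 1) ^ 2, (X 2) ^ 3, X 1 * (X 2) ^ 2, (X 2) ^ 4]

set_option maxRecDepth 10000

namespace QBAux

abbrev MvP : Type := MvPolynomial (Fin 3) ℚ

def tbl : Fin 14 → Fin 3 → Fin 3 → Fin 5 → ℤ :=
  ![
  ![![![1, 0, 0, 0, 0], ![0, 0, 0, 0, 0], ![0, 0, 0, 0, 0]], ![![0, 0, 0, 0, 0], ![0, 0, 0, 0, 0], ![0, 0, 0, 0, 0]], ![![0, 0, 0, 0, 0], ![0, 0, 0, 0, 0], ![0, 0, 0, 0, 0]]],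
  ![![![0, 0, 0, 0, 0], ![0, 0, 0, 0, 0], ![0, 0, 0, 0, 0]], ![![1, 0, 0, 0, 0], ![0, 0, 0, 0, 0], ![0, 0, 0, 0, 0]], ![![0, 0, 0, 0, 0], ![0, 0, 0, 0, 0], ![0, 0, 0, 0, 0]]],
  ![![![0, 0, 0, 0, 0], ![0, 0, 0, 0, 0], ![0, 0, 0, 0, 0]], ![![0, 0, 0, 0, 0], ![0, 0, 0, 0, 0], ![0, 0, 0, 0, 0]], ![![1, 0, 0, 0, 0], ![0, 0, 0, 0, 0], ![0, 0, 0, 0, 0]]],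
  ![![![0, 1, 0, 0, 0], ![0, 0, 0, 0, 0], ![0, 0, 0, 0, 0]], ![![0, 0, 0, 0, 0], ![0, 0, 0, 0, 0], ![0, 0, 0, 0, 0]], ![![0, 0, 0, 0, 0], ![0, 0, 0, 0, 0], ![0, 0, 0, 0, 0]]],
  ![![![0, 0, 0, 0, 0], ![0, 0, 0, 0, 0], ![0, 0, 0, 0, 0]], ![![0, 1, 0, 0, 0], ![0, 0, 0, 0, 0], ![0, 0, 0, 0, 0]], ![![0, 0, 0, 0, 0], ![0, 0, 0, 0, 0], ![0, 0, 0, 0, 0]]],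
  ![![![0, 0, 0, 0, 0], ![1, 0, 0, 0, 0], ![0, 0, 0, 0, 0]], ![![0, 0, 0, 0, 0], ![0, 0, 0, 0, 0], ![0, 0, 0, 0, 0]], ![![0, 0, 0, 0, 0], ![0, 0, 0, 0, 0], ![0, 0, 0, 0, 0]]],
  ![![![0, 0, 0, 0, 0], ![0, 0, 0, 0, 0], ![0, 0, 0, 0, 0]], ![![0, 0, 0, 0, 0], ![1, 0, 0, 0, 0], ![0, 0, 0, 0, 0]], ![![0, 0, 0, 0, 0], ![0, 0, 0, 0, 0], ![0, 0, 0, 0, 0]]],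
  ![![![0, 0, 1, 0, 0], ![0, 0, 0, 0, 0], ![0, 0, 0, 0, 0]], ![![0, 0, 0, 0, 0], ![0, 0, 0, 0, 0], ![0, 0, 0, 0, 0]], ![![0, 0, 0, 0, 0], ![0, 0, 0, 0, 0], ![0, 0, 0, 0, 0]]],
  ![![![0, 0, 0, 0, 0], ![0, 0, 0, 0, 0], ![0, 0, 0, 0, 0]], ![![0, 0, 1, 0, 0], ![0, 0, 0, 0, 0], ![0, 0, 0, 0, 0]], ![![0, 0, 0, 0, 0], ![-1, 0, 0, 0, 0], ![0, 0, 0, 0, 0]]],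
  ![![![0, 0, 0, 0, 0], ![0, 1, 0, 0, 0], ![0, 0, 0, 0, 0]], ![![0, 0, 0, 0, 0], ![0, 0, 0, 0, 0], ![0, 0, 0, 0, 0]], ![![0, 0, 0, 0, 0], ![0, 0, 0, 0, 0], ![0, 0, 0, 0, 0]]],
  ![![![0, 0, 0, 0, 0], ![0, 0, 0, 0, 0], ![1, 0, 0, 0, 0]], ![![0, 0, 0, 0, 0], ![0, 0, 0, 0, 0], ![0, 0, 0, 0, 0]], ![![0, 0, 0, 0, 0], ![0, 0, 0, 0, 0], ![0, 0, 0, 0, 0]]],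
  ![![![0, 0, 0, 6, 0], ![0, 0, 0, 0, 0], ![0, 0, 0, 0, 0]], ![![0, 0, 0, 0, 0], ![0, -1, 0, 0, 0], ![0, 0, 0, 0, 0]], ![![0, 0, 0, 0, 0], ![0, 0, 0, 0, 0], ![0, 0, 0, 0, 0]]],
  ![![![0, 0, 0, 0, 0], ![0, 0, 1, 0, 0], ![0, 0, 0, 0, 0]], ![![0, 0, 0, 0, 0], ![0, 0, 0, 0, 0], ![-1, 0, 0, 0, 0]], ![![0, 0, 0, 0, 0], ![0, 0, 0, 0, 0], ![0, 0, 0, 0, 0]]],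
  ![![![0, 0, 0, 0, 6], ![0, 0, 0, 0, 0], ![0, 0, 0, 0, 0]], ![![0, 0, 0, 0, 0], ![0, 0, -1, 0, 0], ![0, 0, 0, 0, 0]], ![![0, 0, 0, 0, 0], ![0, 0, 0, 0, 0], ![1, 0, 0, 0, 0]]]]

def fZ (i : Fin 14) (a b c : ℕ) : ℤ :=
  if h : a < 3 ∧ b < 3 ∧ c < 5 then tbl i ⟨a, h.1⟩ ⟨b, h.2.1⟩ ⟨c, h.2.2⟩ else 0

lemma fZ_out (i : Fin 14) {a b c : ℕ} (h : 3 ≤ a ∨ 3 ≤ b ∨ 5 ≤ c) : fZ i a b c = 0 := by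
  unfold fZ
  exact dif_neg (by omega)

lemma cond1 (i : Fin 14) (a b c : ℕ) : fZ i (a + 3) b c = 0 :=
  fZ_out i (by omega)

lemma cond2 (i : Fin 14) (a b c : ℕ) : fZ i (a + 2) b (c + 1) = 0 := by
  by_cases h : a < 1 ∧ b < 3 ∧ c < 4
  · have H : ∀ i : Fin 14, ∀ a < 1, ∀ b < 3, ∀ c < 4, fZ i (a + 2) b (c + 1) = 0 := by decide
    exact H i a h.1 b h.2.1 c h.2.2
  · exact fZ_out i (by omega)

lemma cond3 (i : Fin 14) (a b c : ℕ) :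
    fZ i (a + 2) (b + 1) c + fZ i (a + 1) b (c + 2) = 0 := by
  by_cases h : a < 2 ∧ b < 3 ∧ c < 5
  · have H : ∀ i : Fin 14, ∀ a < 2, ∀ b < 3, ∀ c < 5,
        fZ i (a + 2) (b + 1) c + fZ i (a + 1) b (c + 2) = 0 := by decide
    exact H i a h.1 b h.2.1 c h.2.2
  · rw [fZ_out i (by omega), fZ_out i (by omega)]; norm_num

lemma cond4 (i : Fin 14) (a b c : ℕ) :
    6 * fZ i (a + 1) (b + 1) (c + 1) + fZ i a b (c + 3) = 0 := by
  by_cases h : a < 3 ∧ b < 3 ∧ c < 4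
  · have H : ∀ i : Fin 14, ∀ a < 3, ∀ b < 3, ∀ c < 4,
        6 * fZ i (a + 1) (b + 1) (c + 1) + fZ i a b (c + 3) = 0 := by decide
    exact H i a h.1 b h.2.1 c h.2.2
  · rw [fZ_out i (by omega), fZ_out i (by omega)]; norm_num

lemma cond5 (i : Fin 14) (a b c : ℕ) : fZ i (a + 1) b (c + 3) = 0 := by
  by_cases h : a < 2 ∧ b < 3 ∧ c < 2
  · have H : ∀ i : Fin 14, ∀ a < 2, ∀ b < 3, ∀ c < 2, fZ i (a + 1) b (c + 3) = 0 := by decide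
    exact H i a h.1 b h.2.1 c h.2.2
  · exact fZ_out i (by omega)

lemma cond6 (i : Fin 14) (a b c : ℕ) :
    fZ i (a + 1) (b + 2) c + fZ i a (b + 1) (c + 2) = 0 := by
  by_cases h : a < 3 ∧ b < 2 ∧ c < 5
  · have H : ∀ i : Fin 14, ∀ a < 3, ∀ b < 2, ∀ c < 5,
        fZ i (a + 1) (b + 2) c + fZ i a (b + 1) (c + 2) = 0 := by decide
    exact H i a h.1 b h.2.1 c h.2.2
  · rw [fZ_out i (by omega), fZ_out i (by omega)]; norm_num

lemma cond7 (i : Fin 14) (a b c : ℕ) : fZ i a (b + 2) (c + 1) = 0 := by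
  by_cases h : a < 3 ∧ b < 1 ∧ c < 4
  · have H : ∀ i : Fin 14, ∀ a < 3, ∀ b < 1, ∀ c < 4, fZ i a (b + 2) (c + 1) = 0 := by decide
    exact H i a h.1 b h.2.1 c h.2.2
  · exact fZ_out i (by omega)

lemma cond8 (i : Fin 14) (a b c : ℕ) : fZ i a (b + 1) (c + 3) = 0 := by
  by_cases h : a < 3 ∧ b < 2 ∧ c < 2
  · have H : ∀ i : Fin 14, ∀ a < 3, ∀ b < 2, ∀ c < 2, fZ i a (b + 1) (c + 3) = 0 := by decide
    exact H i a h.1 b h.2.1 c h.2.2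
  · exact fZ_out i (by omega)

lemma cond9 (i : Fin 14) (a b c : ℕ) : fZ i a (b + 3) c = 0 :=
  fZ_out i (by omega)

lemma cond10 (i : Fin 14) (a b c : ℕ) : fZ i a b (c + 5) = 0 :=
  fZ_out i (by omega)

noncomputable def fN (i : Fin 14) (a b c : ℕ) : ℚ := (fZ i a b c : ℚ)

lemma fN_out (i : Fin 14) {a b c : ℕ} (h : 3 ≤ a ∨ 3 ≤ b ∨ 5 ≤ c) : fN i a b c = 0 := by
  unfold fN; exact_mod_cast congrArg (fun z : ℤ => (z : ℚ)) (fZ_out i h)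

lemma condQ1 (i : Fin 14) (a b c : ℕ) : fN i (a + 3) b c = 0 := by
  unfold fN; exact_mod_cast congrArg (fun z : ℤ => (z : ℚ)) (cond1 i a b c)

lemma condQ2 (i : Fin 14) (a b c : ℕ) : fN i (a + 2) b (c + 1) = 0 := by
  unfold fN; exact_mod_cast congrArg (fun z : ℤ => (z : ℚ)) (cond2 i a b c)

lemma condQ3 (i : Fin 14) (a b c : ℕ) :
    fN i (a + 2) (b + 1) c + fN i (a + 1) b (c + 2) = 0 := by
  unfold fN; exact_mod_cast congrArg (fun z : ℤ => (z : ℚ)) (cond3 i a b c)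

lemma condQ4 (i : Fin 14) (a b c : ℕ) :
    6 * fN i (a + 1) (b + 1) (c + 1) + fN i a b (c + 3) = 0 := by
  unfold fN; exact_mod_cast congrArg (fun z : ℤ => (z : ℚ)) (cond4 i a b c)

lemma condQ5 (i : Fin 14) (a b c : ℕ) : fN i (a + 1) b (c + 3) = 0 := by
  unfold fN; exact_mod_cast congrArg (fun z : ℤ => (z : ℚ)) (cond5 i a b c)

lemma condQ6 (i : Fin 14) (a b c : ℕ) :
    fN i (a + 1) (b + 2) c + fN i a (b + 1) (c + 2) = 0 := by
  unfold fN; exact_mod_cast congrArg (fun z : ℤ => (z : ℚ)) (cond6 i a b c)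

lemma condQ7 (i : Fin 14) (a b c : ℕ) : fN i a (b + 2) (c + 1) = 0 := by
  unfold fN; exact_mod_cast congrArg (fun z : ℤ => (z : ℚ)) (cond7 i a b c)

lemma condQ8 (i : Fin 14) (a b c : ℕ) : fN i a (b + 1) (c + 3) = 0 := by
  unfold fN; exact_mod_cast congrArg (fun z : ℤ => (z : ℚ)) (cond8 i a b c)

lemma condQ9 (i : Fin 14) (a b c : ℕ) : fN i a (b + 3) c = 0 := by
  unfold fN; exact_mod_cast congrArg (fun z : ℤ => (z : ℚ)) (cond9 i a b c)

lemma condQ10 (i : Fin 14) (a b c : ℕ) : fN i a b (c + 5) = 0 := by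
  unfold fN; exact_mod_cast congrArg (fun z : ℤ => (z : ℚ)) (cond10 i a b c)

noncomputable def E3 (a b c : ℕ) : Fin 3 →₀ ℕ :=
  Finsupp.single 0 a + Finsupp.single 1 b + Finsupp.single 2 c

lemma E3_apply0 (a b c : ℕ) : E3 a b c 0 = a := by
  simp [E3, Finsupp.single_apply]

lemma E3_apply1 (a b c : ℕ) : E3 a b c 1 = b := by
  simp [E3, Finsupp.single_apply]

lemma E3_apply2 (a b c : ℕ) : E3 a b c 2 = c := by
  simp [E3, Finsupp.single_apply]

lemma E3_eta (u : Fin 3 →₀ ℕ) : E3 (u 0) (u 1) (u 2) = u := by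
  ext x
  fin_cases x
  · exact E3_apply0 _ _ _
  · exact E3_apply1 _ _ _
  · exact E3_apply2 _ _ _

noncomputable def lam (i : Fin 14) : MvP →ₗ[ℚ] ℚ :=
  ∑ v : Fin 3 × Fin 3 × Fin 5,
    fN i v.1 v.2.1 v.2.2 • MvPolynomial.lcoeff ℚ (E3 v.1 v.2.1 v.2.2)

lemma lam_monomial (i : Fin 14) (u : Fin 3 →₀ ℕ) (r : ℚ) :
    lam i (MvPolynomial.monomial u r) = fN i (u 0) (u 1) (u 2) * r := by
  simp only [lam, LinearMap.sum_apply, LinearMap.smul_apply, MvPolynomial.lcoeff_apply,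
    MvPolynomial.coeff_monomial, smul_eq_mul]
  by_cases h : u 0 < 3 ∧ u 1 < 3 ∧ u 2 < 5
  · obtain ⟨h1, h2, h3⟩ := h
    rw [Finset.sum_eq_single (⟨⟨u 0, h1⟩, ⟨u 1, h2⟩, ⟨u 2, h3⟩⟩ : Fin 3 × Fin 3 × Fin 5)]
    · rw [if_pos (E3_eta u).symm]
    · rintro ⟨v1, v2, v3⟩ - hv
      rw [if_neg, mul_zero]
      intro he
      apply hv
      have e0 : u 0 = (v1 : ℕ) := by rw [he, E3_apply0]
      have e1 : u 1 = (v2 : ℕ) := by rw [he, E3_apply1]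
      have e2 : u 2 = (v3 : ℕ) := by rw [he, E3_apply2]
      simp only [Prod.mk.injEq, Fin.ext_iff]
      exact ⟨e0.symm, e1.symm, e2.symm⟩
    · intro hne; exact absurd (Finset.mem_univ _) hne
  · rw [fN_out i (by omega), zero_mul]
    apply Finset.sum_eq_zero
    rintro ⟨v1, v2, v3⟩ -
    rw [if_neg, mul_zero]
    intro he
    apply h
    refine ⟨?_, ?_, ?_⟩
    · rw [he, E3_apply0]; exact v1.isLt
    · rw [he, E3_apply1]; exact v2.isLt
    · rw [he, E3_apply2]; exact v3.isLt

lemma X_prod (a b c : ℕ) :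
    (MvPolynomial.X 0 ^ a * MvPolynomial.X 1 ^ b * MvPolynomial.X 2 ^ c : MvP) =
      MvPolynomial.monomial (E3 a b c) 1 := by
  rw [MvPolynomial.X_pow_eq_monomial, MvPolynomial.X_pow_eq_monomial,
    MvPolynomial.X_pow_eq_monomial, MvPolynomial.monomial_mul, MvPolynomial.monomial_mul, E3]
  norm_num

lemma lam_mm (i : Fin 14) (u : Fin 3 →₀ ℕ) (r : ℚ) (a b c : ℕ) (s : ℚ) :
    lam i (MvPolynomial.monomial u r * MvPolynomial.monomial (E3 a b c) s) =
      fN i (u 0 + a) (u 1 + b) (u 2 + c) * (r * s) := by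
  rw [MvPolynomial.monomial_mul, lam_monomial]
  simp only [Finsupp.add_apply, E3_apply0, E3_apply1, E3_apply2]

lemma lam_X (i : Fin 14) (a b c : ℕ) :
    lam i (MvPolynomial.X 0 ^ a * MvPolynomial.X 1 ^ b * MvPolynomial.X 2 ^ c : MvP) =
      fN i a b c := by
  rw [X_prod, lam_monomial, E3_apply0, E3_apply1, E3_apply2, mul_one]

end QBAux

namespace QBAux

open MvPolynomial

lemma van1 (i : Fin 14) (u : Fin 3 →₀ ℕ) (r : ℚ) :
    lam i (monomial u r * ((X 0 : MvP) ^ 3)) = 0 := by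
  rw [show ((X 0 : MvP) ^ 3) = monomial (E3 3 0 0) 1 by rw [← X_prod]; ring, lam_mm]
  simp only [Nat.add_zero]
  linear_combination r * condQ1 i (u 0) (u 1) (u 2)

lemma van2 (i : Fin 14) (u : Fin 3 →₀ ℕ) (r : ℚ) :
    lam i (monomial u r * ((X 0 : MvP) ^ 2 * X 2)) = 0 := by
  rw [show ((X 0 : MvP) ^ 2 * X 2) = monomial (E3 2 0 1) 1 by rw [← X_prod]; ring, lam_mm]
  simp only [Nat.add_zero]
  linear_combination r * condQ2 i (u 0) (u 1) (u 2)

lemma van3 (i : Fin 14) (u : Fin 3 →₀ ℕ) (r : ℚ) :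
    lam i (monomial u r * ((X 0 : MvP) ^ 2 * X 1 + X 0 * (X 2) ^ 2)) = 0 := by
  rw [mul_add, map_add,
    show ((X 0 : MvP) ^ 2 * X 1) = monomial (E3 2 1 0) 1 by rw [← X_prod]; ring,
    show ((X 0 : MvP) * (X 2) ^ 2) = monomial (E3 1 0 2) 1 by rw [← X_prod]; ring,
    lam_mm, lam_mm]
  simp only [Nat.add_zero]
  linear_combination r * condQ3 i (u 0) (u 1) (u 2)

lemma van4 (i : Fin 14) (u : Fin 3 →₀ ℕ) (r : ℚ) :
    lam i (monomial u r * (6 * ((X 0 : MvP) * X 1 * X 2) + (X 2) ^ 3)) = 0 := by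
  have h6 : (6 * ((X 0 : MvP) * X 1 * X 2)) = monomial (E3 1 1 1) 6 := by
    rw [show ((X 0 : MvP) * X 1 * X 2) = monomial (E3 1 1 1) 1 by rw [← X_prod]; ring,
      show ((6 : MvP)) = MvPolynomial.C (6 : ℚ) from (map_ofNat MvPolynomial.C 6).symm,
      MvPolynomial.C_mul_monomial, mul_one]
  rw [mul_add, map_add, h6,
    show (((X 2) : MvP) ^ 3) = monomial (E3 0 0 3) 1 by rw [← X_prod]; ring,
    lam_mm, lam_mm]
  simp only [Nat.add_zero]
  linear_combination r * condQ4 i (u 0) (u 1) (u 2)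

lemma van5 (i : Fin 14) (u : Fin 3 →₀ ℕ) (r : ℚ) :
    lam i (monomial u r * ((X 0 : MvP) * (X 2) ^ 3)) = 0 := by
  rw [show ((X 0 : MvP) * (X 2) ^ 3) = monomial (E3 1 0 3) 1 by rw [← X_prod]; ring, lam_mm]
  simp only [Nat.add_zero]
  linear_combination r * condQ5 i (u 0) (u 1) (u 2)

lemma van6 (i : Fin 14) (u : Fin 3 →₀ ℕ) (r : ℚ) :
    lam i (monomial u r * ((X 0 : MvP) * (X 1) ^ 2 + X 1 * (X 2) ^ 2)) = 0 := by
  rw [mul_add, map_add,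
    show ((X 0 : MvP) * (X 1) ^ 2) = monomial (E3 1 2 0) 1 by rw [← X_prod]; ring,
    show ((X 1 : MvP) * (X 2) ^ 2) = monomial (E3 0 1 2) 1 by rw [← X_prod]; ring,
    lam_mm, lam_mm]
  simp only [Nat.add_zero]
  linear_combination r * condQ6 i (u 0) (u 1) (u 2)

lemma van7 (i : Fin 14) (u : Fin 3 →₀ ℕ) (r : ℚ) :
    lam i (monomial u r * ((X 1 : MvP) ^ 2 * X 2)) = 0 := by
  rw [show ((X 1 : MvP) ^ 2 * X 2) = monomial (E3 0 2 1) 1 by rw [← X_prod]; ring, lam_mm]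
  simp only [Nat.add_zero]
  linear_combination r * condQ7 i (u 0) (u 1) (u 2)

lemma van8 (i : Fin 14) (u : Fin 3 →₀ ℕ) (r : ℚ) :
    lam i (monomial u r * ((X 1 : MvP) * (X 2) ^ 3)) = 0 := by
  rw [show ((X 1 : MvP) * (X 2) ^ 3) = monomial (E3 0 1 3) 1 by rw [← X_prod]; ring, lam_mm]
  simp only [Nat.add_zero]
  linear_combination r * condQ8 i (u 0) (u 1) (u 2)

lemma van9 (i : Fin 14) (u : Fin 3 →₀ ℕ) (r : ℚ) :
    lam i (monomial u r * ((X 1 : MvP) ^ 3)) = 0 := by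
  rw [show ((X 1 : MvP) ^ 3) = monomial (E3 0 3 0) 1 by rw [← X_prod]; ring, lam_mm]
  simp only [Nat.add_zero]
  linear_combination r * condQ9 i (u 0) (u 1) (u 2)

lemma van10 (i : Fin 14) (u : Fin 3 →₀ ℕ) (r : ℚ) :
    lam i (monomial u r * ((X 2 : MvP) ^ 5)) = 0 := by
  rw [show ((X 2 : MvP) ^ 5) = monomial (E3 0 0 5) 1 by rw [← X_prod]; ring, lam_mm]
  simp only [Nat.add_zero]
  linear_combination r * condQ10 i (u 0) (u 1) (u 2)

lemma lam_qg (i : Fin 14) {g : MvP} (hg : ∀ u r, lam i (monomial u r * g) = 0) (q : MvP) :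
    lam i (q * g) = 0 := by
  induction q using MvPolynomial.induction_on' with
  | monomial u r => exact hg u r
  | add p q hp hq => rw [add_mul, map_add, hp, hq, add_zero]

lemma lam_vanish (i : Fin 14) {p : MvP} (hp : p ∈ thmBIdeal) : lam i p = 0 := by
  have main : ∀ q, lam i (q * p) = 0 := by
    rw [thmBIdeal] at hp
    refine Submodule.span_induction ?_ ?_ ?_ ?_ hp
    · intro g hg
      simp only [Set.mem_insert_iff, Set.mem_singleton_iff] at hg
      rcases hg with rfl | rfl | rfl | rfl | rfl | rfl | rfl | rfl | rfl | rfl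
      · exact lam_qg i (van1 i)
      · exact lam_qg i (van2 i)
      · exact lam_qg i (van3 i)
      · exact lam_qg i (van4 i)
      · exact lam_qg i (van5 i)
      · exact lam_qg i (van6 i)
      · exact lam_qg i (van7 i)
      · exact lam_qg i (van8 i)
      · exact lam_qg i (van9 i)
      · exact lam_qg i (van10 i)
    · intro q; rw [mul_zero, map_zero]
    · intro x y _ _ hx hy q; rw [mul_add, map_add, hx, hy, add_zero]
    · intro a x _ hx q
      rw [smul_eq_mul, show q * (a * x) = (q * a) * x by ring]
      exact hx (q * a)
  simpa using main 1

def dz : Fin 14 → ℤ := ![1, 1, 1, 1, 1, 1, 1, 1, 1, 1, 1, 6, 1, 6]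

noncomputable def dv (j : Fin 14) : ℚ := ((dz j : ℤ) : ℚ)

lemma pair_aux {a b c : ℕ} {j : Fin 14}
    (h : ∀ i, fZ i a b c = if i = j then dz j else 0) (i : Fin 14) :
    fN i a b c = if i = j then dv j else 0 := by
  unfold fN dv
  rw [h i, apply_ite (fun z : ℤ => (z : ℚ)), Int.cast_zero]

lemma pair0 (i : Fin 14) : lam i (thmBMonomials 0) = if i = 0 then dv 0 else 0 := by
  rw [show thmBMonomials 0 = (1 : MvP) from rfl,
    show (1 : MvP) = X 0 ^ 0 * X 1 ^ 0 * X 2 ^ 0 by ring, lam_X]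
  exact pair_aux (by decide) i

lemma pair1 (i : Fin 14) : lam i (thmBMonomials 1) = if i = 1 then dv 1 else 0 := by
  rw [show thmBMonomials 1 = (X 0 : MvP) from rfl,
    show (X 0 : MvP) = X 0 ^ 1 * X 1 ^ 0 * X 2 ^ 0 by ring, lam_X]
  exact pair_aux (by decide) i

lemma pair2 (i : Fin 14) : lam i (thmBMonomials 2) = if i = 2 then dv 2 else 0 := by
  rw [show thmBMonomials 2 = ((X 0) ^ 2 : MvP) from rfl,
    show ((X 0) ^ 2 : MvP) = X 0 ^ 2 * X 1 ^ 0 * X 2 ^ 0 by ring, lam_X]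
  exact pair_aux (by decide) i

lemma pair3 (i : Fin 14) : lam i (thmBMonomials 3) = if i = 3 then dv 3 else 0 := by
  rw [show thmBMonomials 3 = (X 2 : MvP) from rfl,
    show (X 2 : MvP) = X 0 ^ 0 * X 1 ^ 0 * X 2 ^ 1 by ring, lam_X]
  exact pair_aux (by decide) i

lemma pair4 (i : Fin 14) : lam i (thmBMonomials 4) = if i = 4 then dv 4 else 0 := by
  rw [show thmBMonomials 4 = (X 0 * X 2 : MvP) from rfl,
    show (X 0 * X 2 : MvP) = X 0 ^ 1 * X 1 ^ 0 * X 2 ^ 1 by ring, lam_X]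
  exact pair_aux (by decide) i

lemma pair5 (i : Fin 14) : lam i (thmBMonomials 5) = if i = 5 then dv 5 else 0 := by
  rw [show thmBMonomials 5 = (X 1 : MvP) from rfl,
    show (X 1 : MvP) = X 0 ^ 0 * X 1 ^ 1 * X 2 ^ 0 by ring, lam_X]
  exact pair_aux (by decide) i

lemma pair6 (i : Fin 14) : lam i (thmBMonomials 6) = if i = 6 then dv 6 else 0 := by
  rw [show thmBMonomials 6 = (X 0 * X 1 : MvP) from rfl,
    show (X 0 * X 1 : MvP) = X 0 ^ 1 * X 1 ^ 1 * X 2 ^ 0 by ring, lam_X]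
  exact pair_aux (by decide) i

lemma pair7 (i : Fin 14) : lam i (thmBMonomials 7) = if i = 7 then dv 7 else 0 := by
  rw [show thmBMonomials 7 = ((X 2) ^ 2 : MvP) from rfl,
    show ((X 2) ^ 2 : MvP) = X 0 ^ 0 * X 1 ^ 0 * X 2 ^ 2 by ring, lam_X]
  exact pair_aux (by decide) i

lemma pair8 (i : Fin 14) : lam i (thmBMonomials 8) = if i = 8 then dv 8 else 0 := by
  rw [show thmBMonomials 8 = (X 0 * (X 2) ^ 2 : MvP) from rfl,
    show (X 0 * (X 2) ^ 2 : MvP) = X 0 ^ 1 * X 1 ^ 0 * X 2 ^ 2 by ring, lam_X]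
  exact pair_aux (by decide) i

lemma pair9 (i : Fin 14) : lam i (thmBMonomials 9) = if i = 9 then dv 9 else 0 := by
  rw [show thmBMonomials 9 = (X 1 * X 2 : MvP) from rfl,
    show (X 1 * X 2 : MvP) = X 0 ^ 0 * X 1 ^ 1 * X 2 ^ 1 by ring, lam_X]
  exact pair_aux (by decide) i

lemma pair10 (i : Fin 14) : lam i (thmBMonomials 10) = if i = 10 then dv 10 else 0 := by
  rw [show thmBMonomials 10 = ((X 1) ^ 2 : MvP) from rfl,
    show ((X 1) ^ 2 : MvP) = X 0 ^ 0 * X 1 ^ 2 * X 2 ^ 0 by ring, lam_X]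
  exact pair_aux (by decide) i

lemma pair11 (i : Fin 14) : lam i (thmBMonomials 11) = if i = 11 then dv 11 else 0 := by
  rw [show thmBMonomials 11 = ((X 2) ^ 3 : MvP) from rfl,
    show ((X 2) ^ 3 : MvP) = X 0 ^ 0 * X 1 ^ 0 * X 2 ^ 3 by ring, lam_X]
  exact pair_aux (by decide) i

lemma pair12 (i : Fin 14) : lam i (thmBMonomials 12) = if i = 12 then dv 12 else 0 := by
  rw [show thmBMonomials 12 = (X 1 * (X 2) ^ 2 : MvP) from rfl,
    show (X 1 * (X 2) ^ 2 : MvP) = X 0 ^ 0 * X 1 ^ 1 * X 2 ^ 2 by ring, lam_X]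
  exact pair_aux (by decide) i

lemma pair13 (i : Fin 14) : lam i (thmBMonomials 13) = if i = 13 then dv 13 else 0 := by
  rw [show thmBMonomials 13 = ((X 2) ^ 4 : MvP) from rfl,
    show ((X 2) ^ 4 : MvP) = X 0 ^ 0 * X 1 ^ 0 * X 2 ^ 4 by ring, lam_X]
  exact pair_aux (by decide) i

lemma pair (i j : Fin 14) : lam i (thmBMonomials j) = if i = j then dv j else 0 := by
  fin_cases j
  exacts [pair0 i, pair1 i, pair2 i, pair3 i, pair4 i, pair5 i, pair6 i, pair7 i,
    pair8 i, pair9 i, pair10 i, pair11 i, pair12 i, pair13 i]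

end QBAux

namespace QBAux

open MvPolynomial

noncomputable abbrev NB : Submodule ℚ Q_B :=
  Submodule.span ℚ (Set.range fun i => Ideal.Quotient.mk thmBIdeal (thmBMonomials i))

lemma gmem1 : ((X 0) ^ 3 : MvP) ∈ ({(X 0) ^ 3, (X 0) ^ 2 * X 2, (X 0) ^ 2 * X 1 + X 0 * (X 2) ^ 2,
      6 * (X 0 * X 1 * X 2) + (X 2) ^ 3, X 0 * (X 2) ^ 3,
      X 0 * (X 1) ^ 2 + X 1 * (X 2) ^ 2, (X 1) ^ 2 * X 2,
      X 1 * (X 2) ^ 3, (X 1) ^ 3, (X 2) ^ 5} : Set MvP) :=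
  Set.mem_insert _ _

lemma gmem2 : ((X 0) ^ 2 * X 2 : MvP) ∈ ({(X 0) ^ 3, (X 0) ^ 2 * X 2, (X 0) ^ 2 * X 1 + X 0 * (X 2) ^ 2,
      6 * (X 0 * X 1 * X 2) + (X 2) ^ 3, X 0 * (X 2) ^ 3,
      X 0 * (X 1) ^ 2 + X 1 * (X 2) ^ 2, (X 1) ^ 2 * X 2,
      X 1 * (X 2) ^ 3, (X 1) ^ 3, (X 2) ^ 5} : Set MvP) :=
  Set.mem_insert_of_mem _ (Set.mem_insert _ _)

lemma gmem3 : ((X 0) ^ 2 * X 1 + X 0 * (X 2) ^ 2 : MvP) ∈ ({(X 0) ^ 3, (X 0) ^ 2 * X 2, (X 0) ^ 2 * X 1 + X 0 * (X 2) ^ 2,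
      6 * (X 0 * X 1 * X 2) + (X 2) ^ 3, X 0 * (X 2) ^ 3,
      X 0 * (X 1) ^ 2 + X 1 * (X 2) ^ 2, (X 1) ^ 2 * X 2,
      X 1 * (X 2) ^ 3, (X 1) ^ 3, (X 2) ^ 5} : Set MvP) :=
  Set.mem_insert_of_mem _ (Set.mem_insert_of_mem _ (Set.mem_insert _ _))

lemma gmem4 : (6 * (X 0 * X 1 * X 2) + (X 2) ^ 3 : MvP) ∈ ({(X 0) ^ 3, (X 0) ^ 2 * X 2, (X 0) ^ 2 * X 1 + X 0 * (X 2) ^ 2,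
      6 * (X 0 * X 1 * X 2) + (X 2) ^ 3, X 0 * (X 2) ^ 3,
      X 0 * (X 1) ^ 2 + X 1 * (X 2) ^ 2, (X 1) ^ 2 * X 2,
      X 1 * (X 2) ^ 3, (X 1) ^ 3, (X 2) ^ 5} : Set MvP) :=
  Set.mem_insert_of_mem _ (Set.mem_insert_of_mem _ (Set.mem_insert_of_mem _ (Set.mem_insert _ _)))

lemma gmem5 : (X 0 * (X 2) ^ 3 : MvP) ∈ ({(X 0) ^ 3, (X 0) ^ 2 * X 2, (X 0) ^ 2 * X 1 + X 0 * (X 2) ^ 2,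
      6 * (X 0 * X 1 * X 2) + (X 2) ^ 3, X 0 * (X 2) ^ 3,
      X 0 * (X 1) ^ 2 + X 1 * (X 2) ^ 2, (X 1) ^ 2 * X 2,
      X 1 * (X 2) ^ 3, (X 1) ^ 3, (X 2) ^ 5} : Set MvP) :=
  Set.mem_insert_of_mem _ (Set.mem_insert_of_mem _ (Set.mem_insert_of_mem _ (Set.mem_insert_of_mem _ (Set.mem_insert _ _))))

lemma gmem6 : (X 0 * (X 1) ^ 2 + X 1 * (X 2) ^ 2 : MvP) ∈ ({(X 0) ^ 3, (X 0) ^ 2 * X 2, (X 0) ^ 2 * X 1 + X 0 * (X 2) ^ 2,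
      6 * (X 0 * X 1 * X 2) + (X 2) ^ 3, X 0 * (X 2) ^ 3,
      X 0 * (X 1) ^ 2 + X 1 * (X 2) ^ 2, (X 1) ^ 2 * X 2,
      X 1 * (X 2) ^ 3, (X 1) ^ 3, (X 2) ^ 5} : Set MvP) :=
  Set.mem_insert_of_mem _ (Set.mem_insert_of_mem _ (Set.mem_insert_of_mem _ (Set.mem_insert_of_mem _ (Set.mem_insert_of_mem _ (Set.mem_insert _ _)))))

lemma gmem7 : ((X 1) ^ 2 * X 2 : MvP) ∈ ({(X 0) ^ 3, (X 0) ^ 2 * X 2, (X 0) ^ 2 * X 1 + X 0 * (X 2) ^ 2,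
      6 * (X 0 * X 1 * X 2) + (X 2) ^ 3, X 0 * (X 2) ^ 3,
      X 0 * (X 1) ^ 2 + X 1 * (X 2) ^ 2, (X 1) ^ 2 * X 2,
      X 1 * (X 2) ^ 3, (X 1) ^ 3, (X 2) ^ 5} : Set MvP) :=
  Set.mem_insert_of_mem _ (Set.mem_insert_of_mem _ (Set.mem_insert_of_mem _ (Set.mem_insert_of_mem _ (Set.mem_insert_of_mem _ (Set.mem_insert_of_mem _ (Set.mem_insert _ _))))))

lemma gmem8 : (X 1 * (X 2) ^ 3 : MvP) ∈ ({(X 0) ^ 3, (X 0) ^ 2 * X 2, (X 0) ^ 2 * X 1 + X 0 * (X 2) ^ 2,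
      6 * (X 0 * X 1 * X 2) + (X 2) ^ 3, X 0 * (X 2) ^ 3,
      X 0 * (X 1) ^ 2 + X 1 * (X 2) ^ 2, (X 1) ^ 2 * X 2,
      X 1 * (X 2) ^ 3, (X 1) ^ 3, (X 2) ^ 5} : Set MvP) :=
  Set.mem_insert_of_mem _ (Set.mem_insert_of_mem _ (Set.mem_insert_of_mem _ (Set.mem_insert_of_mem _ (Set.mem_insert_of_mem _ (Set.mem_insert_of_mem _ (Set.mem_insert_of_mem _ (Set.mem_insert _ _)))))))

lemma gmem9 : ((X 1) ^ 3 : MvP) ∈ ({(X 0) ^ 3, (X 0) ^ 2 * X 2, (X 0) ^ 2 * X 1 + X 0 * (X 2) ^ 2,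
      6 * (X 0 * X 1 * X 2) + (X 2) ^ 3, X 0 * (X 2) ^ 3,
      X 0 * (X 1) ^ 2 + X 1 * (X 2) ^ 2, (X 1) ^ 2 * X 2,
      X 1 * (X 2) ^ 3, (X 1) ^ 3, (X 2) ^ 5} : Set MvP) :=
  Set.mem_insert_of_mem _ (Set.mem_insert_of_mem _ (Set.mem_insert_of_mem _ (Set.mem_insert_of_mem _ (Set.mem_insert_of_mem _ (Set.mem_insert_of_mem _ (Set.mem_insert_of_mem _ (Set.mem_insert_of_mem _ (Set.mem_insert _ _))))))))

lemma gmem10 : ((X 2) ^ 5 : MvP) ∈ ({(X 0) ^ 3, (X 0) ^ 2 * X 2, (X 0) ^ 2 * X 1 + X 0 * (X 2) ^ 2,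
      6 * (X 0 * X 1 * X 2) + (X 2) ^ 3, X 0 * (X 2) ^ 3,
      X 0 * (X 1) ^ 2 + X 1 * (X 2) ^ 2, (X 1) ^ 2 * X 2,
      X 1 * (X 2) ^ 3, (X 1) ^ 3, (X 2) ^ 5} : Set MvP) :=
  Set.mem_insert_of_mem _ (Set.mem_insert_of_mem _ (Set.mem_insert_of_mem _ (Set.mem_insert_of_mem _ (Set.mem_insert_of_mem _ (Set.mem_insert_of_mem _ (Set.mem_insert_of_mem _ (Set.mem_insert_of_mem _ (Set.mem_insert_of_mem _ (Set.mem_singleton _)))))))))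

lemma mem_NB (j : Fin 14) {p : MvP} (hp : thmBMonomials j = p) :
    Ideal.Quotient.mk thmBIdeal p ∈ NB :=
  hp ▸ Submodule.subset_span ⟨j, rfl⟩

lemma mk_zero_of {p : MvP} (g : MvP)
    (hg : g ∈ ({(X 0) ^ 3, (X 0) ^ 2 * X 2, (X 0) ^ 2 * X 1 + X 0 * (X 2) ^ 2,
      6 * (X 0 * X 1 * X 2) + (X 2) ^ 3, X 0 * (X 2) ^ 3,
      X 0 * (X 1) ^ 2 + X 1 * (X 2) ^ 2, (X 1) ^ 2 * X 2,
      X 1 * (X 2) ^ 3, (X 1) ^ 3, (X 2) ^ 5} : Set MvP))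
    (w : MvP) (hp : p = g * w) : Ideal.Quotient.mk thmBIdeal p = 0 := by
  rw [hp]
  exact Ideal.Quotient.eq_zero_iff_mem.2 (Ideal.mul_mem_right _ _ (Ideal.subset_span hg))

lemma mem_of_zero {p : MvP} (h : Ideal.Quotient.mk thmBIdeal p = 0) :
    Ideal.Quotient.mk thmBIdeal p ∈ NB :=
  h ▸ Submodule.zero_mem NB

lemma red_step {g w P Q : MvP}
    (hg : g ∈ ({(X 0) ^ 3, (X 0) ^ 2 * X 2, (X 0) ^ 2 * X 1 + X 0 * (X 2) ^ 2,
      6 * (X 0 * X 1 * X 2) + (X 2) ^ 3, X 0 * (X 2) ^ 3,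
      X 0 * (X 1) ^ 2 + X 1 * (X 2) ^ 2, (X 1) ^ 2 * X 2,
      X 1 * (X 2) ^ 3, (X 1) ^ 3, (X 2) ^ 5} : Set MvP))
    (hPQ : g * w = P + Q) (hQ : Ideal.Quotient.mk thmBIdeal Q ∈ NB) :
    Ideal.Quotient.mk thmBIdeal P ∈ NB := by
  have h0 : Ideal.Quotient.mk thmBIdeal (g * w) = 0 :=
    Ideal.Quotient.eq_zero_iff_mem.2 (Ideal.mul_mem_right _ _ (Ideal.subset_span hg))
  rw [hPQ, map_add] at h0
  have h1 : Ideal.Quotient.mk thmBIdeal P = - Ideal.Quotient.mk thmBIdeal Q :=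
    eq_neg_of_add_eq_zero_left h0
  rw [h1]
  exact Submodule.neg_mem NB hQ

lemma six_smul (x : Q_B) : (6 : ℚ) • x = 6 * x := by
  rw [show ((6 : ℚ)) = ((6 : ℕ) : ℚ) by norm_num, Nat.cast_smul_eq_nsmul, nsmul_eq_mul,
    Nat.cast_ofNat]

lemma red_step6 {w P Q : MvP}
    (hPQ : (6 * ((X 0 : MvP) * X 1 * X 2) + (X 2) ^ 3) * w = 6 * P + Q)
    (hQ : Ideal.Quotient.mk thmBIdeal Q ∈ NB) :
    Ideal.Quotient.mk thmBIdeal P ∈ NB := by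
  have h0 : Ideal.Quotient.mk thmBIdeal ((6 * ((X 0 : MvP) * X 1 * X 2) + (X 2) ^ 3) * w) = 0 :=
    Ideal.Quotient.eq_zero_iff_mem.2 (Ideal.mul_mem_right _ _ (Ideal.subset_span gmem4))
  rw [hPQ, map_add, map_mul, map_ofNat] at h0
  have h2 : ((6 : ℚ)) • Ideal.Quotient.mk thmBIdeal P = - Ideal.Quotient.mk thmBIdeal Q := by
    rw [six_smul]
    exact eq_neg_of_add_eq_zero_left h0
  have h1 : Ideal.Quotient.mk thmBIdeal P =
      (-(6⁻¹ : ℚ)) • Ideal.Quotient.mk thmBIdeal Q := by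
    calc Ideal.Quotient.mk thmBIdeal P
        = (6⁻¹ : ℚ) • (((6 : ℚ)) • Ideal.Quotient.mk thmBIdeal P) := by
          rw [smul_smul]; norm_num
      _ = (6⁻¹ : ℚ) • (- Ideal.Quotient.mk thmBIdeal Q) := by rw [h2]
      _ = (-(6⁻¹ : ℚ)) • Ideal.Quotient.mk thmBIdeal Q := by rw [smul_neg, ← neg_smul]
  rw [h1]
  exact Submodule.smul_mem NB _ hQ

lemma keyA0 (b c : ℕ) :
    Ideal.Quotient.mk thmBIdeal ((X 1 : MvP) ^ b * X 2 ^ c) ∈ NB := by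
  rcases b with _ | _ | _ | b
  · rcases c with _ | _ | _ | _ | _ | c
    · exact mem_NB 0 (by rw [show thmBMonomials 0 = (1 : MvP) from rfl]; ring)
    · exact mem_NB 3 (by rw [show thmBMonomials 3 = (X 2 : MvP) from rfl]; ring)
    · exact mem_NB 7 (by rw [show thmBMonomials 7 = ((X 2) ^ 2 : MvP) from rfl]; ring)
    · exact mem_NB 11 (by rw [show thmBMonomials 11 = ((X 2) ^ 3 : MvP) from rfl]; ring)
    · exact mem_NB 13 (by rw [show thmBMonomials 13 = ((X 2) ^ 4 : MvP) from rfl]; ring)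
    · exact mem_of_zero (mk_zero_of ((X 2) ^ 5) gmem10 ((X 2) ^ c) (by ring))
  · rcases c with _ | _ | _ | c
    · exact mem_NB 5 (by rw [show thmBMonomials 5 = (X 1 : MvP) from rfl]; ring)
    · exact mem_NB 9 (by rw [show thmBMonomials 9 = (X 1 * X 2 : MvP) from rfl]; ring)
    · exact mem_NB 12 (by rw [show thmBMonomials 12 = (X 1 * (X 2) ^ 2 : MvP) from rfl]; ring)
    · exact mem_of_zero (mk_zero_of (X 1 * (X 2) ^ 3) gmem8 ((X 2) ^ c) (by ring))
  · rcases c with _ | c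
    · exact mem_NB 10 (by rw [show thmBMonomials 10 = ((X 1) ^ 2 : MvP) from rfl]; ring)
    · exact mem_of_zero (mk_zero_of ((X 1) ^ 2 * X 2) gmem7 ((X 2) ^ c) (by ring))
  · exact mem_of_zero (mk_zero_of ((X 1) ^ 3) gmem9 ((X 1) ^ b * (X 2) ^ c) (by ring))

lemma keyA1 (b c : ℕ) :
    Ideal.Quotient.mk thmBIdeal ((X 0 : MvP) * X 1 ^ b * X 2 ^ c) ∈ NB := by
  rcases b with _ | _ | b
  · rcases c with _ | _ | _ | c
    · exact mem_NB 1 (by rw [show thmBMonomials 1 = (X 0 : MvP) from rfl]; ring)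
    · exact mem_NB 4 (by rw [show thmBMonomials 4 = (X 0 * X 2 : MvP) from rfl]; ring)
    · exact mem_NB 8 (by rw [show thmBMonomials 8 = (X 0 * (X 2) ^ 2 : MvP) from rfl]; ring)
    · exact mem_of_zero (mk_zero_of (X 0 * (X 2) ^ 3) gmem5 ((X 2) ^ c) (by ring))
  · rcases c with _ | c
    · exact mem_NB 6 (by rw [show thmBMonomials 6 = (X 0 * X 1 : MvP) from rfl]; ring)
    · exact red_step6 (w := (X 2) ^ c) (Q := (X 1 : MvP) ^ 0 * X 2 ^ (c + 3)) (by ring)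
        (keyA0 0 (c + 3))
  · exact red_step (g := X 0 * (X 1) ^ 2 + X 1 * (X 2) ^ 2) gmem6
      (w := (X 1 : MvP) ^ b * X 2 ^ c) (Q := (X 1 : MvP) ^ (b + 1) * X 2 ^ (c + 2)) (by ring)
      (keyA0 (b + 1) (c + 2))

lemma keyA2 (b c : ℕ) :
    Ideal.Quotient.mk thmBIdeal ((X 0 : MvP) ^ 2 * X 1 ^ b * X 2 ^ c) ∈ NB := by
  rcases b with _ | b
  · rcases c with _ | c
    · exact mem_NB 2 (by rw [show thmBMonomials 2 = ((X 0) ^ 2 : MvP) from rfl]; ring)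
    · exact mem_of_zero (mk_zero_of ((X 0) ^ 2 * X 2) gmem2 ((X 2) ^ c) (by ring))
  · exact red_step (g := (X 0) ^ 2 * X 1 + X 0 * (X 2) ^ 2) gmem3
      (w := (X 1 : MvP) ^ b * X 2 ^ c) (Q := (X 0 : MvP) * X 1 ^ b * X 2 ^ (c + 2)) (by ring)
      (keyA1 b (c + 2))

lemma key (a b c : ℕ) :
    Ideal.Quotient.mk thmBIdeal ((X 0 : MvP) ^ a * X 1 ^ b * X 2 ^ c) ∈ NB := by
  rcases a with _ | _ | _ | a
  · rw [show ((X 0 : MvP) ^ 0 * X 1 ^ b * X 2 ^ c) = (X 1 : MvP) ^ b * X 2 ^ c by ring]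
    exact keyA0 b c
  · rw [show ((X 0 : MvP) ^ 1 * X 1 ^ b * X 2 ^ c) = (X 0 : MvP) * X 1 ^ b * X 2 ^ c by ring]
    exact keyA1 b c
  · rw [show ((X 0 : MvP) ^ (0 + 1 + 1) * X 1 ^ b * X 2 ^ c)
      = (X 0 : MvP) ^ 2 * X 1 ^ b * X 2 ^ c by ring]
    exact keyA2 b c
  · exact mem_of_zero (mk_zero_of ((X 0) ^ 3) gmem1
      ((X 0) ^ a * (X 1) ^ b * (X 2) ^ c) (by ring))

lemma span_top :
    Submodule.span ℚ
      (Set.range fun i => Ideal.Quotient.mk thmBIdeal (thmBMonomials i)) = ⊤ := by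
  rw [Submodule.eq_top_iff']
  intro x
  obtain ⟨q, rfl⟩ := Ideal.Quotient.mk_surjective x
  induction q using MvPolynomial.induction_on' with
  | add p q hp hq => rw [map_add]; exact Submodule.add_mem _ hp hq
  | monomial u r =>
    have h1 : (monomial u r : MvP) = r • (X 0 ^ (u 0) * X 1 ^ (u 1) * X 2 ^ (u 2)) := by
      rw [X_prod, E3_eta, MvPolynomial.smul_monomial, smul_eq_mul, mul_one]
    rw [h1, ← Ideal.Quotient.mkₐ_eq_mk ℚ, map_smul, Ideal.Quotient.mkₐ_eq_mk]
    exact Submodule.smul_mem _ _ (key (u 0) (u 1) (u 2))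

lemma indep :
    LinearIndependent ℚ (fun i => Ideal.Quotient.mk thmBIdeal (thmBMonomials i)) := by
  rw [Fintype.linearIndependent_iff]
  intro g hg i
  have hmk : Ideal.Quotient.mk thmBIdeal (∑ j, g j • thmBMonomials j) = 0 := by
    rw [← Ideal.Quotient.mkₐ_eq_mk ℚ, map_sum]
    simp only [map_smul, Ideal.Quotient.mkₐ_eq_mk]
    exact hg
  have hmem : (∑ j, g j • thmBMonomials j) ∈ thmBIdeal :=
    Ideal.Quotient.eq_zero_iff_mem.1 hmk
  have h0 := lam_vanish i hmem
  rw [map_sum] at h0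
  simp only [map_smul, smul_eq_mul, pair, mul_ite, mul_zero,
    Finset.sum_ite_eq, Finset.mem_univ, if_true] at h0
  have hdz : ∀ k : Fin 14, dz k ≠ 0 := by decide
  have hdv : dv i ≠ 0 := Int.cast_ne_zero.2 (hdz i)
  exact (mul_eq_zero.1 h0).resolve_right hdv

end QBAux


theorem Q_B_finrank_and_basis :
    Module.finrank ℚ Q_B = 14 ∧
    LinearIndependent ℚ (fun i => Ideal.Quotient.mk thmBIdeal (thmBMonomials i)) ∧
    Submodule.span ℚ
      (Set.range (fun i => Ideal.Quotient.mk thmBIdeal (thmBMonomials i))) = ⊤ := by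
  refine ⟨?_, QBAux.indep, QBAux.span_top⟩
  have B : Module.Basis (Fin 14) ℚ Q_B := Module.Basis.mk QBAux.indep (le_of_eq QBAux.span_top.symm)
  rw [Module.finrank_eq_card_basis B, Fintype.card_fin]
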